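/- arXiv:1804.00642 — 4 statements merged into one kernel-verified Lean document; each statement's English description precedes it below -/
import Mathlib

section
/- Let K be a field, A an associative unital K-algebra, and M a finite-dimensional indecomposable A-module. Then dim_K(End_A(M)/J(End_A(M))) ≤ dim_K M, where J(End_A(M)) denotes the Jacobson radical of the endomorphism ring End_A(M). -/
universe u

/-- A module is indecomposable if it is nonzero and is not the direct sum of two nonzero
submodules. -/
def IsIndecomposableModule (A M : Type u) [Ring A] [AddCommGroup M] [Module A M] : Prop :=
  Nontrivial M ∧ ∀ W₁ W₂ : Submodule A M, IsCompl W₁ W₂ → W₁ = ⊥ ∨ W₂ = ⊥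

instance endIsScalarTower (K A M : Type u) [Field K] [Ring A] [Algebra K A]
    [AddCommGroup M] [Module A M] [Module K M] [IsScalarTower K A M] [SMulCommClass A K M] :
    IsScalarTower K (Module.End A M) (Module.End A M) :=
  ⟨fun _ _ _ => rfl⟩


theorem aux_unit_or_nilpotent (K A M : Type u) [Field K] [Ring A] [Algebra K A]
    [AddCommGroup M] [Module A M] [Module K M] [IsScalarTower K A M] [SMulCommClass A K M]
    [FiniteDimensional K M]
    (hM : ∀ W₁ W₂ : Submodule A M, IsCompl W₁ W₂ → W₁ = ⊥ ∨ W₂ = ⊥)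
    (f : Module.End A M) : IsUnit f ∨ IsNilpotent f := by
  haveI : IsNoetherian A M := isNoetherian_of_tower K inferInstance
  haveI : IsArtinian A M := isArtinian_of_tower K inferInstance
  obtain ⟨n, hn⟩ := Filter.eventually_atTop.mp f.eventually_isCompl_ker_pow_range_pow
  have hc := hn (n + 1) (Nat.le_succ n)
  rcases hM _ _ hc with h | h
  · left
    rw [Module.End.isUnit_iff]
    have hinj : Function.Injective (f ^ (n + 1)) := by
      rw [← LinearMap.ker_eq_bot]; exact h
    have hsurj : Function.Surjective (f ^ (n + 1)) := by
      rw [← LinearMap.range_eq_top]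
      have := hc.sup_eq_top
      rwa [h, bot_sup_eq] at this
    constructor
    · rw [pow_succ, Module.End.mul_eq_comp, LinearMap.coe_comp] at hinj
      exact Function.Injective.of_comp hinj
    · rw [pow_succ', Module.End.mul_eq_comp, LinearMap.coe_comp] at hsurj
      exact Function.Surjective.of_comp hsurj
  · right
    refine ⟨n + 1, ?_⟩
    ext x
    have : (f ^ (n + 1)) x ∈ LinearMap.range (f ^ (n + 1)) := LinearMap.mem_range_self _ x
    rw [h] at this
    simpa using this

theorem aux_nilpotent_not_injective (A M : Type u) [Ring A]
    [AddCommGroup M] [Module A M] [Nontrivial M] {f : Module.End A M}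
    (hf : IsNilpotent f) : ¬ Function.Injective f := by
  intro hinj
  obtain ⟨n, hn⟩ := hf
  have hinjn : Function.Injective (f ^ n) := by
    clear hn
    induction n with
    | zero => exact fun a b h => by simpa using h
    | succ k ih =>
      rw [pow_succ, Module.End.mul_eq_comp, LinearMap.coe_comp]
      exact ih.comp hinj
  obtain ⟨x, y, hxy⟩ := exists_pair_ne M
  apply hxy
  have hx : x = 0 := hinjn (by rw [hn]; simp)
  have hy : y = 0 := hinjn (by rw [hn]; simp)
  rw [hx, hy]


theorem aux_mem_jacobson_of_not_isUnit (K A M : Type u) [Field K] [Ring A] [Algebra K A]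
    [AddCommGroup M] [Module A M] [Module K M] [IsScalarTower K A M] [SMulCommClass A K M]
    [FiniteDimensional K M] [Nontrivial M]
    (hM : ∀ W₁ W₂ : Submodule A M, IsCompl W₁ W₂ → W₁ = ⊥ ∨ W₂ = ⊥)
    {f : Module.End A M} (hf : ¬ IsUnit f) :
    f ∈ Ideal.jacobson (⊥ : Ideal (Module.End A M)) := by
  rw [Ideal.mem_jacobson_iff]
  intro y
  have hfnil : IsNilpotent f := (aux_unit_or_nilpotent K A M hM f).resolve_left hf
  have hninj : ¬ Function.Injective f := aux_nilpotent_not_injective A M hfnil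
  have h1 : ¬ IsUnit (y * f) := by
    intro h
    rw [Module.End.isUnit_iff] at h
    have h' := h.injective
    rw [Module.End.mul_eq_comp, LinearMap.coe_comp] at h'
    exact hninj (Function.Injective.of_comp h')
  have h2 : IsNilpotent (y * f) := (aux_unit_or_nilpotent K A M hM (y * f)).resolve_left h1
  obtain ⟨u, hu⟩ := h2.isUnit_add_one
  refine ⟨↑u⁻¹, ?_⟩
  have key : (↑u⁻¹ : Module.End A M) * (y * f + 1) = 1 := by rw [← hu]; exact u.inv_mul
  have h3 : (↑u⁻¹ : Module.End A M) * y * f + ↑u⁻¹ - 1 = 0 := by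
    have : (↑u⁻¹ : Module.End A M) * y * f + ↑u⁻¹ = ↑u⁻¹ * (y * f + 1) := by
      rw [mul_add, mul_one, mul_assoc]
    rw [this, key, sub_self]
  rw [h3]; exact Submodule.zero_mem ⊥

/-- for a finite-dimensional indecomposable module `M` over a `K`-algebra `A`,
the dimension of `End_A(M)` modulo its Jacobson radical is at most `dim_K M`. -/
theorem endomorphism_quotient_dim_le (K A M : Type u) [Field K] [Ring A] [Algebra K A]
    [AddCommGroup M] [Module A M] [Module K M] [IsScalarTower K A M] [SMulCommClass A K M]
    [FiniteDimensional K M] (hM : IsIndecomposableModule A M) :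
    Module.finrank K
        (Module.End A M ⧸
          Submodule.restrictScalars K (Ideal.jacobson (⊥ : Ideal (Module.End A M)))) ≤
      Module.finrank K M := by
  classical
  obtain ⟨hnt, hind⟩ := hM
  set E := Module.End A M with hE
  set J : Ideal E := Ideal.jacobson ⊥ with hJ
  haveI : Nontrivial M := hnt
  -- E is nontrivial
  haveI hEnt : Nontrivial E := by
    refine ⟨1, 0, fun h => ?_⟩
    obtain ⟨x, y, hxy⟩ := exists_pair_ne M
    apply hxy
    calc x = (1 : E) x := rfl
      _ = (0 : E) x := by rw [h]
      _ = (0 : E) y := rfl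
      _ = (1 : E) y := by rw [h]
      _ = y := rfl
  -- elements of J are nilpotent
  have hJnil : ∀ {f : E}, f ∈ J → IsNilpotent f := by
    intro f hf
    refine (aux_unit_or_nilpotent K A M hind f).resolve_left fun hu => ?_
    have : J = ⊤ := Ideal.eq_top_of_isUnit_mem _ hf hu
    rw [hJ, Ideal.jacobson_eq_top_iff] at this
    exact one_ne_zero ((Submodule.mem_bot E).mp (this ▸ Submodule.mem_top : (1 : E) ∈ (⊥ : Ideal E)))
  -- J is closed under right multiplication
  have hJmulr : ∀ {f : E}, f ∈ J → ∀ g : E, f * g ∈ J := by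
    intro f hf g
    exact J.mul_mem_right g hf
  -- the scalar tower K / E / M
  letI : IsScalarTower K E M := ⟨fun k f m => by
    show (k • f) m = k • (f m); rw [LinearMap.smul_apply]⟩
  -- Nakayama: J • ⊤ ≠ ⊤
  have hNtop : (J • ⊤ : Submodule E M) ≠ ⊤ := by
    intro hN
    obtain ⟨t, ht⟩ : ∃ t : Finset M, Submodule.span K (t : Set M) = ⊤ :=
      Module.Finite.fg_top (R := K) (M := M)
    -- K-span is contained in E-span
    have hKE : ∀ s : Finset M, Submodule.span K (s : Set M) ≤
        Submodule.restrictScalars K (Submodule.span E (s : Set M)) := fun s =>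
      Submodule.span_le.mpr Submodule.subset_span
    have htE : Submodule.span E (t : Set M) = ⊤ := by
      rw [eq_top_iff]
      intro m _
      exact hKE t (ht ▸ Submodule.mem_top : m ∈ Submodule.span K (t : Set M))
    -- strong induction on cardinality
    have key : ∀ n (s : Finset M), s.card = n → Submodule.span E (s : Set M) ≠ ⊤ := by
      intro n
      induction n with
      | zero =>
        intro s hs0 hstop
        rw [Finset.card_eq_zero] at hs0
        subst hs0
        rw [Finset.coe_empty, Submodule.span_empty] at hstop
        obtain ⟨x, y, hxy⟩ := exists_pair_ne M
        apply hxy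
        have hx : x ∈ (⊥ : Submodule E M) := hstop ▸ Submodule.mem_top
        have hy : y ∈ (⊥ : Submodule E M) := hstop ▸ Submodule.mem_top
        rw [Submodule.mem_bot] at hx hy
        rw [hx, hy]
      | succ n ih =>
        intro s hcard htop
        obtain ⟨x, hx⟩ : s.Nonempty := Finset.card_pos.mp (by omega)
        set T : Submodule E M := Submodule.span E ((s.erase x : Finset M) : Set M) with hT
        let V : Submodule E M :=
          { carrier := {m | ∃ h : E, h ∈ J ∧ m - h • x ∈ T}
            add_mem' := by
              rintro a b ⟨h1, h1J, ht1⟩ ⟨h2, h2J, ht2⟩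
              refine ⟨h1 + h2, J.add_mem h1J h2J, ?_⟩
              have : a + b - (h1 + h2) • x = (a - h1 • x) + (b - h2 • x) := by
                rw [add_smul]; abel
              rw [this]
              exact T.add_mem ht1 ht2
            zero_mem' := ⟨0, J.zero_mem, by rw [zero_smul, sub_zero]; exact T.zero_mem⟩
            smul_mem' := by
              rintro g a ⟨h, hJh, ht1⟩
              refine ⟨g * h, ?_, ?_⟩
              · have := J.smul_mem g hJh
                rwa [smul_eq_mul] at this
              · have : g • a - (g * h) • x = g • (a - h • x) := by
                  rw [mul_smul, smul_sub]
                rw [this]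
                exact T.smul_mem g ht1 }
        let W : Submodule E M :=
          { carrier := {m | ∀ f : E, f ∈ J → f • m ∈ V}
            add_mem' := by
              intro a b ha hb f hf
              rw [smul_add]
              exact V.add_mem (ha f hf) (hb f hf)
            zero_mem' := by
              intro f hf
              rw [smul_zero]
              exact V.zero_mem
            smul_mem' := by
              intro g a ha f hf
              rw [← mul_smul]
              exact ha (f * g) (hJmulr hf g) }
        have hsW : Submodule.span E (s : Set M) ≤ W := by
          rw [Submodule.span_le]
          intro y hy f hf
          by_cases hyx : y = x
          · subst hyx
            exact ⟨f, hf, by rw [sub_self]; exact T.zero_mem⟩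
          · refine ⟨0, J.zero_mem, ?_⟩
            rw [zero_smul, sub_zero]
            exact T.smul_mem f (Submodule.subset_span (by
              rw [Finset.coe_erase]
              exact ⟨hy, hyx⟩))
        have hxV : x ∈ V := by
          have hxJ : x ∈ (J • ⊤ : Submodule E M) := by rw [hN]; exact Submodule.mem_top
          refine Submodule.smul_induction_on hxJ ?_ ?_
          · intro f hf m _
            have hmW : m ∈ W := hsW (htop ▸ Submodule.mem_top)
            exact hmW f hf
          · intro a b ha hb
            exact V.add_mem ha hb
        obtain ⟨h, hJh, hxT⟩ := hxV
        obtain ⟨u, hu⟩ := (hJnil hJh).isUnit_one_sub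
        have hxT' : x ∈ T := by
          have h1 : ((1 : E) - h) • x ∈ T := by
            have : ((1 : E) - h) • x = x - h • x := by rw [sub_smul, one_smul]
            rw [this]
            exact hxT
          have h2 := T.smul_mem (↑u⁻¹ : E) h1
          rwa [← mul_smul, ← hu, u.inv_mul, one_smul] at h2
        refine ih (s.erase x) (by rw [Finset.card_erase_of_mem hx]; omega) ?_
        rw [eq_top_iff, ← htop, Submodule.span_le]
        intro y hy
        by_cases hyx : y = x
        · subst hyx; exact hxT'
        · exact Submodule.subset_span (by rw [Finset.coe_erase]; exact ⟨hy, hyx⟩)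
    exact key t.card t rfl htE
  -- pick x outside J • ⊤
  obtain ⟨x, hxN⟩ : ∃ x : M, x ∉ (J • ⊤ : Submodule E M) := by
    by_contra hc
    push_neg at hc
    exact hNtop (eq_top_iff.mpr fun m _ => hc m)
  set NK : Submodule K M := Submodule.restrictScalars K (J • ⊤ : Submodule E M) with hNK
  let ev : E →ₗ[K] M :=
    { toFun := fun f => f • x
      map_add' := fun f g => add_smul f g x
      map_smul' := fun k f => smul_assoc k f x }
  let φ : E →ₗ[K] (M ⧸ NK) := NK.mkQ.comp ev
  have hker : LinearMap.ker φ = Submodule.restrictScalars K J := by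
    ext f
    have : f ∈ LinearMap.ker φ ↔ f • x ∈ (J • ⊤ : Submodule E M) := by
      rw [LinearMap.mem_ker]
      show NK.mkQ (f • x) = 0 ↔ _
      rw [Submodule.mkQ_apply, Submodule.Quotient.mk_eq_zero]
      rfl
    rw [this]
    constructor
    · intro hfx
      by_contra hfJ
      have hfu : IsUnit f := by
        by_contra hnu
        exact hfJ (aux_mem_jacobson_of_not_isUnit K A M hind hnu)
      obtain ⟨u, hu⟩ := hfu
      apply hxN
      have h2 := (J • ⊤ : Submodule E M).smul_mem (↑u⁻¹ : E) hfx
      rwa [← mul_smul, ← hu, u.inv_mul, one_smul] at h2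
    · intro hf
      exact Submodule.smul_mem_smul hf Submodule.mem_top
  calc Module.finrank K (E ⧸ Submodule.restrictScalars K J)
      = Module.finrank K (LinearMap.range φ) := by
        rw [← hker]
        exact (LinearMap.quotKerEquivRange φ).finrank_eq
    _ ≤ Module.finrank K (M ⧸ NK) := Submodule.finrank_le _
    _ ≤ Module.finrank K M := Submodule.finrank_quotient_le NK
end

section
/- Let k ⊆ K ⊆ L be fields, A a k-algebra, and M a finite-dimensional indecomposable A_K-module. If some indecomposable direct summand of M_L := M ⊗_K L is defined over K, then M_L is an indecomposable A_L-module. -/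
open scoped TensorProduct

universe u

/-- The transcendence degree of a field extension `K/k`, defined as the supremum of the
cardinalities of algebraically independent subsets of `K` over `k`. -/
noncomputable def fieldTrdeg (k K : Type u) [Field k] [Field K] [Algebra k K] : Cardinal.{u} :=
  ⨆ s : { s : Set K // AlgebraicIndependent k ((↑) : s → K) }, Cardinal.mk s.1

/-- A finite-dimensional module over `A ⊗[k] K`, presented as a finite-dimensional `K`-vector
space `V` together with a `k`-algebra action of `A` by `K`-linear endomorphisms. -/
structure AlgModOver (k : Type u) [Field k] (A : Type u) [Ring A] [Algebra k A]
    (K : Type u) [Field K] [Algebra k K] : Type (u + 1) where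
  V : Type u
  [isAddCommGroup : AddCommGroup V]
  [isModule : Module K V]
  [isFinite : FiniteDimensional K V]
  ρ : A → (V →ₗ[K] V)
  ρ_add : ∀ a b : A, ρ (a + b) = ρ a + ρ b
  ρ_mul : ∀ a b : A, ρ (a * b) = ρ a ∘ₗ ρ b
  ρ_one : ρ 1 = LinearMap.id
  ρ_algebraMap : ∀ c : k, ρ (algebraMap k A c) = algebraMap k K c • LinearMap.id

attribute [instance] AlgModOver.isAddCommGroup AlgModOver.isModule AlgModOver.isFinite

namespace AlgModOver

variable {k A : Type u} [Field k] [Ring A] [Algebra k A]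

/-- Isomorphism of `A ⊗[k] K`-modules. -/
def Iso {K : Type u} [Field K] [Algebra k K] (M N : AlgModOver k A K) : Prop :=
  ∃ e : M.V ≃ₗ[K] N.V, ∀ (a : A) (v : M.V), e (M.ρ a v) = N.ρ a (e v)

/-- An `A`-invariant subspace. -/
def IsInvariant {K : Type u} [Field K] [Algebra k K] (M : AlgModOver k A K)
    (W : Submodule K M.V) : Prop :=
  ∀ a : A, ∀ v ∈ W, M.ρ a v ∈ W

/-- The submodule structure on an invariant subspace. -/
def subrep {K : Type u} [Field K] [Algebra k K] (M : AlgModOver k A K)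
    (W : Submodule K M.V) (hW : M.IsInvariant W) : AlgModOver k A K where
  V := W
  ρ a := (M.ρ a).restrict (hW a)
  ρ_add a b := by ext v; simp [M.ρ_add, LinearMap.restrict_apply]
  ρ_mul a b := by ext v; simp [M.ρ_mul, LinearMap.restrict_apply]
  ρ_one := by ext v; simp [M.ρ_one, LinearMap.restrict_apply]
  ρ_algebraMap c := by ext v; simp [M.ρ_algebraMap, LinearMap.restrict_apply]

/-- A module is indecomposable if it is nonzero and is not the direct sum of two nonzero
invariant subspaces. -/
def Indecomposable {K : Type u} [Field K] [Algebra k K] (M : AlgModOver k A K) : Prop :=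
  Nontrivial M.V ∧ ∀ W₁ W₂ : Submodule K M.V, M.IsInvariant W₁ → M.IsInvariant W₂ →
    IsCompl W₁ W₂ → W₁ = ⊥ ∨ W₂ = ⊥

/-- Base change of an `A ⊗[k] K₀`-module along a field extension `K/K₀`. -/
noncomputable def baseChange {K₀ : Type u} [Field K₀] [Algebra k K₀]
    (K : Type u) [Field K] [Algebra k K] [Algebra K₀ K] [IsScalarTower k K₀ K]
    (N : AlgModOver k A K₀) : AlgModOver k A K where
  V := K ⊗[K₀] N.V
  ρ a := LinearMap.baseChange K (N.ρ a)
  ρ_add a b := by rw [N.ρ_add, LinearMap.baseChange_add]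
  ρ_mul a b := by rw [N.ρ_mul, LinearMap.baseChange_comp]
  ρ_one := by rw [N.ρ_one, LinearMap.baseChange_id]
  ρ_algebraMap c := by
    rw [N.ρ_algebraMap]
    refine LinearMap.ext fun x => ?_
    induction x using TensorProduct.induction_on with
    | zero => simp
    | tmul y v =>
        simp only [LinearMap.baseChange_smul, LinearMap.baseChange_id, LinearMap.smul_apply,
          LinearMap.id_apply, TensorProduct.smul_tmul', TensorProduct.smul_tmul]
        rw [TensorProduct.tmul_smul, TensorProduct.smul_tmul', algebraMap_smul, algebraMap_smul]
    | add x y hx hy => simp_all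

/-- A module over `A ⊗[k] L` is defined over a smaller field `K` with `k ⊆ K ⊆ L`. -/
def IsDefinedOverField {L : Type u} [Field L] [Algebra k L] (M : AlgModOver k A L)
    (K : Type u) [Field K] [Algebra k K] [Algebra K L] [IsScalarTower k K L] : Prop :=
  ∃ N : AlgModOver k A K, Iso (N.baseChange L) M

/-- `M` is defined over the intermediate field `K₀`. -/
def IsDefinedOver {K : Type u} [Field K] [Algebra k K] (M : AlgModOver k A K)
    (K₀ : IntermediateField k K) : Prop :=
  ∃ N : AlgModOver k A K₀, Iso (N.baseChange K) M

/-- The essential dimension of `M`: the least transcendence degree of a field of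
definition of `M`. -/
noncomputable def essDim {K : Type u} [Field K] [Algebra k K] (M : AlgModOver k A K) :
    Cardinal.{u} :=
  ⨅ K₀ : { K₀ : IntermediateField k K // M.IsDefinedOver K₀ }, fieldTrdeg k K₀.1

end AlgModOver

/-- `A ⊗[k] K` has finite representation type: there are only finitely many isomorphism
classes of finite-dimensional indecomposable modules. -/
def FiniteRepType (k A : Type u) [Field k] [Ring A] [Algebra k A]
    (K : Type u) [Field K] [Algebra k K] : Prop :=
  ∃ (ι : Type u) (_ : Finite ι) (f : ι → AlgModOver k A K),
    ∀ M : AlgModOver k A K, M.Indecomposable → ∃ i, M.Iso (f i)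

namespace AlgModAux

open AlgModOver Function

variable {k A : Type u} [Field k] [Ring A] [Algebra k A]

section OneField

variable {K : Type u} [Field K] [Algebra k K]

theorem indec_of_iso {P Q : AlgModOver k A K} (h : P.Iso Q) (hP : P.Indecomposable) :
    Q.Indecomposable := by
  obtain ⟨e, he⟩ := h
  have he' : ∀ (a : A) (w : Q.V), e.symm (Q.ρ a w) = P.ρ a (e.symm w) := by
    intro a w
    apply e.injective
    rw [he, e.apply_symm_apply, e.apply_symm_apply]
  constructor
  · have := hP.1
    exact e.symm.toEquiv.nontrivial
  · intro W₁ W₂ h₁ h₂ hc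
    set o : Submodule K Q.V ≃o Submodule K P.V := Submodule.orderIsoMapComap e.symm with ho
    have inv : ∀ W, Q.IsInvariant W → P.IsInvariant (o W) := by
      intro W hW a v hv
      obtain ⟨w, hw, rfl⟩ := hv
      show P.ρ a (e.symm w) ∈ o W
      rw [← he']
      exact Submodule.mem_map_of_mem (hW a w hw)
    have hbot : ∀ W : Submodule K Q.V, o W = ⊥ → W = ⊥ := by
      intro W hWb
      have := congrArg o.symm hWb
      rwa [o.symm_apply_apply, map_bot] at this
    rcases hP.2 (o W₁) (o W₂) (inv _ h₁) (inv _ h₂) (o.isCompl hc) with hb | hb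
    · exact Or.inl (hbot _ hb)
    · exact Or.inr (hbot _ hb)

theorem iso_symm {P Q : AlgModOver k A K} (h : P.Iso Q) : Q.Iso P := by
  obtain ⟨e, he⟩ := h
  refine ⟨e.symm, fun a w => ?_⟩
  apply e.injective
  rw [he, e.apply_symm_apply, e.apply_symm_apply]

theorem pow_comm {P : AlgModOver k A K} (u : Module.End K P.V)
    (hu : ∀ a v, u (P.ρ a v) = P.ρ a (u v)) (n : ℕ) :
    ∀ a v, (u ^ n) (P.ρ a v) = P.ρ a ((u ^ n) v) := by
  induction n with
  | zero => intro a v; simp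
  | succ n ih =>
      intro a v
      rw [pow_succ, Module.End.mul_apply, Module.End.mul_apply, hu, ih]

theorem bij_or_nilp {P : AlgModOver k A K} (hP : P.Indecomposable) (u : Module.End K P.V)
    (hu : ∀ a v, u (P.ρ a v) = P.ρ a (u v)) :
    Function.Bijective u ∨ ∃ n, u ^ n = 0 := by
  obtain ⟨n, hn, hn1⟩ :=
    ((u.eventually_isCompl_ker_pow_range_pow).and (Filter.eventually_ge_atTop 1)).exists
  have hker : P.IsInvariant (LinearMap.ker (u ^ n)) := by
    intro a v hv
    simp only [LinearMap.mem_ker] at hv ⊢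
    rw [pow_comm u hu n, hv, map_zero]
  have hran : P.IsInvariant (LinearMap.range (u ^ n)) := by
    intro a v hv
    obtain ⟨w, rfl⟩ := hv
    exact ⟨P.ρ a w, pow_comm u hu n a w⟩
  rcases hP.2 _ _ hker hran hn with hb | hb
  · left
    have hinj : Function.Injective u := by
      intro x y hxy
      have : u ^ n = u ^ (n - 1) * u := by
        conv_lhs => rw [← Nat.succ_pred_eq_of_pos hn1]
        rw [pow_succ]
        rfl
      have hxy' : (u ^ n) x = (u ^ n) y := by
        rw [this, Module.End.mul_apply, Module.End.mul_apply, hxy]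
      have : (u ^ n) (x - y) = 0 := by rw [map_sub, hxy', sub_self]
      have hx : x - y ∈ LinearMap.ker (u ^ n) := this
      rw [hb, Submodule.mem_bot] at hx
      exact sub_eq_zero.mp hx
    exact ⟨hinj, (LinearMap.injective_iff_surjective).mp hinj⟩
  · right
    exact ⟨n, LinearMap.range_eq_bot.mp hb⟩

theorem sum_ne_one {P : AlgModOver k A K} (hP : P.Indecomposable) {ι : Type*} (s : Finset ι)
    (u : ι → Module.End K P.V)
    (hcomm : ∀ i a v, u i (P.ρ a v) = P.ρ a (u i v))
    (hbij : ∀ i ∈ s, ¬ Function.Bijective (u i)) :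
    (∑ i ∈ s, u i) ≠ 1 := by
  classical
  induction s using Finset.induction generalizing u with
  | empty =>
      simp only [Finset.sum_empty]
      intro h0
      have := hP.1
      obtain ⟨x, hx⟩ := exists_ne (0 : P.V)
      have : (0 : Module.End K P.V) x = (1 : Module.End K P.V) x := by rw [h0]
      simp only [LinearMap.zero_apply, Module.End.one_apply] at this
      exact hx this.symm
  | @insert j s' hj ih =>
      intro hsum
      rw [Finset.sum_insert hj] at hsum
      obtain ⟨n, hn⟩ := (bij_or_nilp hP (u j) (hcomm j)).resolve_left
        (hbij j (Finset.mem_insert_self j s'))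
      set t := u j with ht
      set v : Module.End K P.V := ∑ i ∈ Finset.range n, t ^ i with hv
      have hgeom : v * (1 - t) = 1 := by
        have h1 : v * (t - 1) = t ^ n - 1 := geom_sum_mul t n
      -- v * (1 - t) = -(v * (t-1)) = -(t^n - 1) = 1
        have h2 : v * (1 - t) = -(v * (t - 1)) := by
          rw [mul_sub, mul_one, mul_sub, mul_one, neg_sub]
        rw [h2, h1, hn, zero_sub, neg_neg]
      have hvcomm : ∀ a x, v (P.ρ a x) = P.ρ a (v x) := by
        intro a x
        rw [hv]
        simp only [LinearMap.coe_sum, Finset.sum_apply, map_sum]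
        exact Finset.sum_congr rfl fun i _ => pow_comm t (hcomm j) i a x
      have hw : (1 : Module.End K P.V) - t = ∑ i ∈ s', u i := by
        rw [← hsum]; abel
      refine ih (fun i => v * u i) (fun i a x => ?_) (fun i hi hb => ?_) ?_
      · rw [Module.End.mul_apply, Module.End.mul_apply, hcomm i, hvcomm]
      · refine hbij i (Finset.mem_insert_of_mem hi) ?_
        have hinj : Function.Injective (u i) := by
          intro x y hxy
          exact hb.injective (by simp only [Module.End.mul_apply, hxy])
        exact ⟨hinj, (LinearMap.injective_iff_surjective).mp hinj⟩
      · rw [← Finset.mul_sum, ← hw, hgeom]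

end OneField

end AlgModAux
namespace AlgModAux2

open AlgModOver Function TensorProduct

variable {k : Type u} [Field k]
variable {K L : Type u} [Field K] [Algebra k K] [Field L] [Algebra k L]
  [Algebra K L] [IsScalarTower k K L]

theorem exists_retraction : ∃ r : L →ₗ[K] K, r 1 = 1 := by
  have hinj : Function.Injective (Algebra.linearMap K L) := fun x y hxy =>
    (algebraMap K L).injective hxy
  set S : Submodule K L := LinearMap.range (Algebra.linearMap K L) with hS
  obtain ⟨q, hq⟩ := Submodule.exists_isCompl S
  set e : K ≃ₗ[K] S := LinearEquiv.ofInjective _ hinj with hedef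
  refine ⟨e.symm.toLinearMap ∘ₗ (S.projectionOnto q hq), ?_⟩
  have h1 : (1 : L) ∈ S := ⟨1, by simp⟩
  have hproj : S.projectionOnto q hq 1 = ⟨1, h1⟩ := by
    have := Submodule.projectionOnto_apply_left hq (⟨1, h1⟩ : S)
    simpa using this
  simp only [LinearMap.comp_apply, hproj, LinearEquiv.coe_coe]
  have he1 : e 1 = ⟨1, h1⟩ := Subtype.ext (by
    rw [hedef, LinearEquiv.ofInjective_apply, Algebra.linearMap_apply, map_one])
  rw [← he1, e.symm_apply_apply]

variable {P Q Q' : Type u} [AddCommGroup P] [Module K P] [AddCommGroup Q] [Module K Q]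
  [AddCommGroup Q'] [Module K Q']

/-- The `K`-linear isomorphism `L ⊗[K] Q ≃ (γ →₀ Q)` coming from a `K`-basis of `L`. -/
noncomputable def psi {γ : Type u} (c : Module.Basis γ K L) (Q : Type u) [AddCommGroup Q]
    [Module K Q] : (L ⊗[K] Q) ≃ₗ[K] (γ →₀ Q) :=
  letI := Classical.decEq γ
  (TensorProduct.congr c.repr (LinearEquiv.refl K Q)) ≪≫ₗ TensorProduct.finsuppScalarLeft K Q γ

variable {γ : Type u} (c : Module.Basis γ K L)

lemma psi_tmul (t : L) (q : Q) (i : γ) : psi c Q (t ⊗ₜ[K] q) i = c.repr t i • q := by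
  simp [psi, TensorProduct.congr_tmul, TensorProduct.finsuppScalarLeft_apply_tmul_apply]

lemma psi_symm_single (i : γ) (q : Q) : (psi c Q).symm (Finsupp.single i q) = c i ⊗ₜ[K] q := by
  simp [psi, TensorProduct.finsuppScalarLeft_symm_apply_single, TensorProduct.congr_symm_tmul,
    Module.Basis.repr_symm_single_one]

lemma psi_expand (y : L ⊗[K] Q) : y = ((psi c Q) y).sum fun i q => c i ⊗ₜ[K] q := by
  conv_lhs => rw [← (psi c Q).symm_apply_apply y]
  generalize (psi c Q) y = l
  conv_lhs => rw [← Finsupp.sum_single l]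
  rw [map_finsuppSum]
  exact Finsupp.sum_congr fun i _ => psi_symm_single c i _

lemma psi_map (g : Q →ₗ[K] Q') (y : L ⊗[K] Q) (i : γ) :
    psi c Q' ((g.baseChange L) y) i = g (psi c Q y i) := by
  induction y using TensorProduct.induction_on with
  | zero => simp
  | tmul t q => rw [LinearMap.baseChange_tmul, psi_tmul, psi_tmul, map_smul]
  | add x y hx hy => simp only [map_add, Finsupp.add_apply, hx, hy]

/-- The `K`-linear components of an `L`-linear map between base changes. -/
noncomputable def comp' (F : (L ⊗[K] P) →ₗ[L] (L ⊗[K] Q)) (i : γ) : P →ₗ[K] Q :=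
  (Finsupp.lapply i) ∘ₗ (psi c Q).toLinearMap ∘ₗ (F.restrictScalars K) ∘ₗ (TensorProduct.mk K L P 1)

lemma comp'_apply (F : (L ⊗[K] P) →ₗ[L] (L ⊗[K] Q)) (i : γ) (x : P) :
    comp' c F i x = psi c Q (F ((1 : L) ⊗ₜ[K] x)) i := rfl

lemma comp'_expand [FiniteDimensional K P] (F : (L ⊗[K] P) →ₗ[L] (L ⊗[K] Q)) :
    ∃ s : Finset γ, ∀ x : P, F ((1 : L) ⊗ₜ[K] x) = ∑ i ∈ s, c i ⊗ₜ[K] comp' c F i x := by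
  classical
  set B := Module.finBasis K P with hB
  set s : Finset γ :=
    Finset.univ.biUnion (fun j => (psi c Q (F ((1:L) ⊗ₜ[K] B j))).support) with hs
  have hzero : ∀ i ∉ s, comp' c F i = 0 := by
    intro i hi
    apply B.ext
    intro j
    rw [comp'_apply, LinearMap.zero_apply]
    by_contra hne
    exact hi (Finset.mem_biUnion.mpr ⟨j, Finset.mem_univ j,
      Finsupp.mem_support_iff.mpr hne⟩)
  refine ⟨s, fun x => ?_⟩
  have hsub : (psi c Q (F ((1:L) ⊗ₜ[K] x))).support ⊆ s := by
    intro i hi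
    by_contra hns
    have h0 := hzero i hns
    have : comp' c F i x ≠ 0 := by
      rw [comp'_apply]
      exact Finsupp.mem_support_iff.mp hi
    rw [h0] at this
    exact this rfl
  conv_lhs => rw [psi_expand c (F ((1:L) ⊗ₜ[K] x))]
  rw [Finsupp.sum, Finset.sum_subset hsub ?h]
  case h =>
    intro i _ hi
    rw [Finsupp.notMem_support_iff.mp hi, TensorProduct.tmul_zero]
  exact Finset.sum_congr rfl fun i _ => by rw [comp'_apply]

variable {A : Type u} [Ring A] [Algebra k A]

theorem baseChange_comm' (P Q : AlgModOver k A K) (f : P.V →ₗ[K] Q.V)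
    (hf : ∀ a v, f (P.ρ a v) = Q.ρ a (f v)) (a : A) (y : L ⊗[K] P.V) :
    (f.baseChange L) ((P.ρ a).baseChange L y) = (Q.ρ a).baseChange L ((f.baseChange L) y) := by
  induction y using TensorProduct.induction_on with
  | zero => simp
  | tmul t v => simp [hf]
  | add x y hx hy => simp only [map_add, hx, hy]

lemma comp'_comm (P Q : AlgModOver k A K) (F : (L ⊗[K] P.V) →ₗ[L] (L ⊗[K] Q.V))
    (hF : ∀ (a : A) y, F ((P.ρ a).baseChange L y) = (Q.ρ a).baseChange L (F y)) (i : γ)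
    (a : A) (x : P.V) :
    comp' c F i (P.ρ a x) = Q.ρ a (comp' c F i x) := by
  have h1 : (1 : L) ⊗ₜ[K] (P.ρ a x) = (P.ρ a).baseChange L ((1:L) ⊗ₜ[K] x) := by
    rw [LinearMap.baseChange_tmul]
  rw [comp'_apply, comp'_apply, h1, hF, psi_map]

/-- A retraction applied to the tensor product. -/
noncomputable def Rr (r : L →ₗ[K] K) (Q : Type u) [AddCommGroup Q] [Module K Q] :
    (L ⊗[K] Q) →ₗ[K] Q :=
  (TensorProduct.lid K Q).toLinearMap ∘ₗ (r.rTensor Q)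

lemma Rr_tmul (r : L →ₗ[K] K) (t : L) (q : Q) : Rr r Q (t ⊗ₜ[K] q) = r t • q := by
  simp [Rr]

end AlgModAux2
/-- if some indecomposable direct summand of `M ⊗_K L` is defined over `K`,
where `M` is an indecomposable module over `A ⊗[k] K`, then `M ⊗_K L` is indecomposable. -/
theorem baseChange_indecomposable_of_summand_definedOver (k A K L : Type u)
    [Field k] [Ring A] [Algebra k A] [Field K] [Algebra k K]
    [Field L] [Algebra k L] [Algebra K L] [IsScalarTower k K L]
    (M : AlgModOver k A K) (hM : M.Indecomposable)
    (h : ∃ (W₁ W₂ : Submodule L (M.baseChange L).V)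
        (hW₁ : (M.baseChange L).IsInvariant W₁) (_ : (M.baseChange L).IsInvariant W₂),
        IsCompl W₁ W₂ ∧ ((M.baseChange L).subrep W₁ hW₁).Indecomposable ∧
          ((M.baseChange L).subrep W₁ hW₁).IsDefinedOverField K) :
    (M.baseChange L).Indecomposable := by
  classical
  obtain ⟨W₁, W₂, hW₁, hW₂, hcompl, hindec, hdef⟩ := h
  obtain ⟨N, e₀, he₀⟩ := hdef
  have hNL : (N.baseChange L).Indecomposable :=
    AlgModAux.indec_of_iso (AlgModAux.iso_symm ⟨e₀, he₀⟩) hindec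
  have hsymm : ∀ (a : A) (z : ((M.baseChange L).subrep W₁ hW₁).V),
      e₀.symm (((M.baseChange L).subrep W₁ hW₁).ρ a z) = (N.baseChange L).ρ a (e₀.symm z) := by
    intro a z
    apply e₀.injective
    rw [he₀, e₀.apply_symm_apply, e₀.apply_symm_apply]
  set π : (M.baseChange L).V →ₗ[L] W₁ := W₁.projectionOnto W₂ hcompl with hπdef
  set Ft : (L ⊗[K] N.V) →ₗ[L] (L ⊗[K] M.V) := W₁.subtype ∘ₗ e₀.toLinearMap with hFtdef
  set Gt : (L ⊗[K] M.V) →ₗ[L] (L ⊗[K] N.V) := e₀.symm.toLinearMap ∘ₗ π with hGtdef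
  have hFt_comm : ∀ (a : A) (y : L ⊗[K] N.V),
      Ft ((N.ρ a).baseChange L y) = (M.ρ a).baseChange L (Ft y) := by
    intro a y
    exact congrArg W₁.subtype (he₀ a y)
  have hπ_left : ∀ w : W₁, π (w : (M.baseChange L).V) = w :=
    fun w => Submodule.projectionOnto_apply_left hcompl w
  have hπ_right : ∀ v ∈ W₂, π v = 0 :=
    fun v hv => Submodule.projectionOnto_apply_of_mem_right hcompl hv
  have hGt_comm : ∀ (a : A) (y : L ⊗[K] M.V),
      Gt ((M.ρ a).baseChange L y) = (N.ρ a).baseChange L (Gt y) := by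
    intro a y
    have hy : (y : (M.baseChange L).V) ∈ W₁ ⊔ W₂ := by
      rw [hcompl.sup_eq_top]; exact Submodule.mem_top (R := L) (M := (M.baseChange L).V)
    obtain ⟨x, hx, z, hz, rfl⟩ := (Submodule.mem_sup (p := W₁) (p' := W₂)).mp hy
    have hπy : π (x + z) = ⟨x, hx⟩ := by
      rw [map_add, hπ_left ⟨x, hx⟩, hπ_right z hz, add_zero]
    have hπρ : π ((M.ρ a).baseChange L (x + z))
        = ⟨(M.ρ a).baseChange L x, hW₁ a x hx⟩ := by
      have e1 : (M.ρ a).baseChange L (x + z) = @HAdd.hAdd (M.baseChange L).V (M.baseChange L).V (M.baseChange L).V _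
          ((⟨(M.ρ a).baseChange L x, hW₁ a x hx⟩ : W₁) : (M.baseChange L).V)
          ((M.ρ a).baseChange L z) := map_add _ x z
      rw [e1]
      exact (map_add π _ _).trans ((congrArg₂ (· + ·) (hπ_left ⟨(M.ρ a).baseChange L x, hW₁ a x hx⟩)
        (hπ_right ((M.ρ a).baseChange L z) (hW₂ a z hz))).trans (add_zero _))
    show e₀.symm (π ((M.ρ a).baseChange L (x + z)))
      = (N.ρ a).baseChange L (e₀.symm (π (x + z)))
    rw [hπρ, hπy]
    exact hsymm a ⟨x, hx⟩
  have hπ_left' : ∀ w : ((M.baseChange L).subrep W₁ hW₁).V, π (W₁.subtype w) = w :=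
    fun w => hπ_left w
  have hGF : ∀ y : L ⊗[K] N.V, Gt (Ft y) = y := by
    intro y
    show e₀.symm (π (W₁.subtype (e₀ y))) = y
    rw [hπ_left' (e₀ y)]; exact e₀.symm_apply_apply y
  obtain ⟨r, hr⟩ := AlgModAux2.exists_retraction (K := K) (L := L)
  set c := Module.Basis.ofVectorSpace K L with hcdef
  obtain ⟨s, hs⟩ := AlgModAux2.comp'_expand c Ft
  obtain ⟨t, ht⟩ := AlgModAux2.comp'_expand c Gt
  set fc := AlgModAux2.comp' c Ft with hfcdef
  set gc := AlgModAux2.comp' c Gt with hgcdef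
  have hfc_comm : ∀ i (a : A) x, fc i (N.ρ a x) = M.ρ a (fc i x) :=
    fun i a x => AlgModAux2.comp'_comm c N M Ft hFt_comm i a x
  have hgc_comm : ∀ j (a : A) x, gc j (M.ρ a x) = N.ρ a (gc j x) :=
    fun j a x => AlgModAux2.comp'_comm c M N Gt hGt_comm j a x
  have key : ∀ x : N.V, x = ∑ i ∈ s, ∑ j ∈ t, r (c i * c j) • gc j (fc i x) := by
    intro x
    have h1 : Gt (Ft ((1:L) ⊗ₜ[K] x)) = (1:L) ⊗ₜ[K] x := hGF _
    have h2 : Gt (Ft ((1:L) ⊗ₜ[K] x))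
        = ∑ i ∈ s, ∑ j ∈ t, ((c i : L) * c j) ⊗ₜ[K] gc j (fc i x) := by
      rw [hs x, map_sum]
      refine Finset.sum_congr rfl fun i _ => ?_
      have e1 : (c i : L) ⊗ₜ[K] (fc i x) = (c i : L) • ((1:L) ⊗ₜ[K] (fc i x)) := by
        rw [TensorProduct.smul_tmul', smul_eq_mul, mul_one]
      rw [e1, map_smul, ht (fc i x), Finset.smul_sum]
      refine Finset.sum_congr rfl fun j _ => ?_
      rw [TensorProduct.smul_tmul', smul_eq_mul]
    have h4 := congrArg (AlgModAux2.Rr r N.V) (h1.symm.trans h2)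
    simp only [map_sum, AlgModAux2.Rr_tmul, hr, one_smul] at h4
    exact h4
  have hone : (1 : Module.End K N.V)
      = ∑ p ∈ s ×ˢ t, r (c p.1 * c p.2) • (gc p.2 ∘ₗ fc p.1) := by
    apply LinearMap.ext
    intro x
    simp only [Module.End.one_apply, LinearMap.sum_apply, LinearMap.smul_apply,
      LinearMap.comp_apply]
    rw [Finset.sum_product]
    exact key x
  have honeL : (1 : Module.End L (L ⊗[K] N.V))
      = ∑ p ∈ s ×ˢ t, r (c p.1 * c p.2) • ((gc p.2 ∘ₗ fc p.1).baseChange L) := by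
    have hsum := map_sum (LinearMap.baseChangeHom K L N.V N.V)
      (fun p => r (c p.1 * c p.2) • (gc p.2 ∘ₗ fc p.1)) (s ×ˢ t)
    simp only [LinearMap.baseChangeHom_apply, LinearMap.baseChange_smul] at hsum
    calc (1 : Module.End L (L ⊗[K] N.V)) = (1 : Module.End K N.V).baseChange L :=
          (LinearMap.baseChange_one K N.V).symm
      _ = _ := by rw [hone]; exact hsum
  have hucomm : ∀ (p : _ × _) (a : A) (y : L ⊗[K] N.V),
      (r (c p.1 * c p.2) • ((gc p.2 ∘ₗ fc p.1).baseChange L)) ((N.ρ a).baseChange L y)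
      = (N.ρ a).baseChange L
        ((r (c p.1 * c p.2) • ((gc p.2 ∘ₗ fc p.1).baseChange L)) y) := by
    intro p a y
    have hcomp_comm : ∀ (a : A) x, (gc p.2 ∘ₗ fc p.1) (N.ρ a x)
        = N.ρ a ((gc p.2 ∘ₗ fc p.1) x) := by
      intro a x
      rw [LinearMap.comp_apply, LinearMap.comp_apply, hfc_comm, hgc_comm]
    rw [LinearMap.smul_apply, LinearMap.smul_apply, LinearMap.map_smul_of_tower]
    congr 1
    exact AlgModAux2.baseChange_comm' N N (gc p.2 ∘ₗ fc p.1) hcomp_comm a y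
  have hex : ¬ ∀ p ∈ s ×ˢ t, ¬ Function.Bijective
      ⇑(r (c p.1 * c p.2) • ((gc p.2 ∘ₗ fc p.1).baseChange L)) := by
    intro hall
    exact AlgModAux.sum_ne_one hNL (s ×ˢ t) _ hucomm hall honeL.symm
  push_neg at hex
  obtain ⟨p, hps, hpbij⟩ := hex
  have hbcinj : Function.Injective ((gc p.2 ∘ₗ fc p.1).baseChange L) := by
    intro x y hxy
    refine hpbij.injective (a₁ := x) (a₂ := y) ?_
    simp only [LinearMap.smul_apply, hxy]
  have hRone : ∀ x : N.V, AlgModAux2.Rr r N.V ((1:L) ⊗ₜ[K] x) = x := fun x => by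
    rw [AlgModAux2.Rr_tmul, hr, one_smul]
  have huinj : Function.Injective (gc p.2 ∘ₗ fc p.1) := by
    intro x y hxy
    have h1 : (gc p.2 ∘ₗ fc p.1).baseChange L ((1:L) ⊗ₜ[K] x)
        = (gc p.2 ∘ₗ fc p.1).baseChange L ((1:L) ⊗ₜ[K] y) := by
      rw [LinearMap.baseChange_tmul, LinearMap.baseChange_tmul, hxy]
    have h2 := hbcinj h1
    have h3 := congrArg (AlgModAux2.Rr r N.V) h2
    rwa [hRone, hRone] at h3
  have hubij : Function.Bijective (gc p.2 ∘ₗ fc p.1) :=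
    ⟨huinj, (LinearMap.injective_iff_surjective).mp huinj⟩
  set ue := LinearEquiv.ofBijective (gc p.2 ∘ₗ fc p.1) hubij with huedef
  have huinv1 : ∀ x, (gc p.2 ∘ₗ fc p.1) (ue.symm x) = x := fun x => ue.apply_symm_apply x
  have huinv2 : ∀ x, ue.symm ((gc p.2 ∘ₗ fc p.1) x) = x := fun x => ue.symm_apply_apply x
  have hu_comm : ∀ (a : A) x, (gc p.2 ∘ₗ fc p.1) (N.ρ a x)
      = N.ρ a ((gc p.2 ∘ₗ fc p.1) x) := fun a x => by
    rw [LinearMap.comp_apply, LinearMap.comp_apply, hfc_comm, hgc_comm]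
  have huinv_comm : ∀ (a : A) x, ue.symm (N.ρ a x) = N.ρ a (ue.symm x) := by
    intro a x
    apply huinj
    rw [huinv1, hu_comm, huinv1]
  have hfinj : Function.Injective (fc p.1) := by
    intro a b hab
    apply huinj
    show gc p.2 (fc p.1 a) = gc p.2 (fc p.1 b)
    rw [hab]
  set PP : Module.End K M.V := fc p.1 ∘ₗ (ue.symm.toLinearMap ∘ₗ gc p.2) with hPPdef
  have hPP_apply : ∀ x, PP x = fc p.1 (ue.symm (gc p.2 x)) := fun x => rfl
  have hgPP : ∀ x, gc p.2 (PP x) = gc p.2 x := by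
    intro x
    rw [hPP_apply]
    exact huinv1 (gc p.2 x)
  have hPP_idem : ∀ x, PP (PP x) = PP x := by
    intro x
    rw [hPP_apply (PP x), hgPP, ← hPP_apply]
  have hPP_comm : ∀ (a : A) x, PP (M.ρ a x) = M.ρ a (PP x) := by
    intro a x
    rw [hPP_apply, hPP_apply, hgc_comm, huinv_comm, hfc_comm]
  have hker_inv : M.IsInvariant (LinearMap.ker PP) := by
    intro a v hv
    rw [LinearMap.mem_ker] at hv ⊢
    rw [hPP_comm, hv, map_zero]
  have hran_inv : M.IsInvariant (LinearMap.range PP) := by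
    intro a v hv
    obtain ⟨w, rfl⟩ := hv
    exact ⟨M.ρ a w, hPP_comm a w⟩
  have hdisj : Disjoint (LinearMap.range PP) (LinearMap.ker PP) := by
    rw [Submodule.disjoint_def]
    intro x hx1 hx2
    obtain ⟨y, rfl⟩ := hx1
    rw [LinearMap.mem_ker] at hx2
    rw [← hPP_idem y]
    exact hx2
  have hcodis : Codisjoint (LinearMap.range PP) (LinearMap.ker PP) := by
    rw [codisjoint_iff, eq_top_iff]
    intro x _
    refine Submodule.mem_sup.mpr ⟨PP x, ⟨x, rfl⟩, x - PP x, ?_, by abel⟩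
    rw [LinearMap.mem_ker, map_sub, hPP_idem, sub_self]
  rcases hM.2 _ _ hran_inv hker_inv ⟨hdisj, hcodis⟩ with hb | hb
  · exfalso
    have hNV : Nontrivial N.V := by
      by_contra hns
      rw [not_nontrivial_iff_subsingleton] at hns
      have hall : ∀ z : L ⊗[K] N.V, z = 0 := by
        intro z
        induction z using TensorProduct.induction_on with
        | zero => rfl
        | tmul a b => rw [Subsingleton.elim b (0 : N.V), TensorProduct.tmul_zero]
        | add v w hv hw => rw [hv, hw, add_zero]
      obtain ⟨x, y, hxy⟩ := hNL.1
      exact hxy ((hall x).trans (hall y).symm)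
    obtain ⟨x0, hx0⟩ := exists_ne (0 : N.V)
    have hPf : PP (fc p.1 x0) = fc p.1 x0 := by
      rw [hPP_apply]
      have h5 : gc p.2 (fc p.1 x0) = (gc p.2 ∘ₗ fc p.1) x0 := rfl
      rw [h5, huinv2]
    have hmem : fc p.1 x0 ∈ LinearMap.range PP := ⟨fc p.1 x0, hPf⟩
    rw [hb, Submodule.mem_bot] at hmem
    apply hx0
    apply hfinj
    rw [hmem, map_zero]
  · have hPid : ∀ x, PP x = x := by
      intro x
      have hmem : x - PP x ∈ LinearMap.ker PP := by
        rw [LinearMap.mem_ker, map_sub, hPP_idem, sub_self]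
      rw [hb, Submodule.mem_bot] at hmem
      exact (sub_eq_zero.mp hmem).symm
    have hfsurj : Function.Surjective (fc p.1) := by
      intro x
      exact ⟨ue.symm (gc p.2 x), hPid x⟩
    set fe := LinearEquiv.ofBijective (fc p.1) ⟨hfinj, hfsurj⟩ with hfedef
    have hcmp1 : (fc p.1) ∘ₗ fe.symm.toLinearMap = LinearMap.id := by
      apply LinearMap.ext
      intro x
      exact fe.apply_symm_apply x
    have hcmp2 : fe.symm.toLinearMap ∘ₗ (fc p.1) = LinearMap.id := by
      apply LinearMap.ext
      intro x
      exact fe.symm_apply_apply x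
    have hb1 : ((fc p.1).baseChange L) ∘ₗ ((fe.symm.toLinearMap).baseChange L)
        = LinearMap.id := by
      rw [← LinearMap.baseChange_comp, hcmp1, LinearMap.baseChange_id]
    have hb2 : ((fe.symm.toLinearMap).baseChange L) ∘ₗ ((fc p.1).baseChange L)
        = LinearMap.id := by
      rw [← LinearMap.baseChange_comp, hcmp2, LinearMap.baseChange_id]
    have hbij : Function.Bijective ((fc p.1).baseChange L) := by
      constructor
      · intro a b hab
        have h1 := DFunLike.congr_fun hb2 a
        have h2 := DFunLike.congr_fun hb2 b
        simp only [LinearMap.comp_apply, LinearMap.id_apply] at h1 h2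
        rw [← h1, ← h2, hab]
      · intro y
        refine ⟨(fe.symm.toLinearMap).baseChange L y, ?_⟩
        have h1 := DFunLike.congr_fun hb1 y
        simpa only [LinearMap.comp_apply, LinearMap.id_apply] using h1
    refine AlgModAux.indec_of_iso
      ⟨LinearEquiv.ofBijective ((fc p.1).baseChange L) hbij, ?_⟩ hNL
    intro a v
    exact AlgModAux2.baseChange_comm' N M (fc p.1) (fun a x => hfc_comm p.1 a x) a v
end

section
/- Let Q be a finite quiver with Λ_Q > 0 (i.e., Q is wild). Then there exist a nonempty subset S ⊆ Q₀, a vector α ∈ ℝ^S, and λ ∈ ℝ such that: the full subquiver Q_S is connected and wild (Λ_{Q_S} > 0), α_i > 0 for all i ∈ S, Σ_{i ∈ S} α_i = 1, (α, e_i) = −2λ for every i ∈ S (the bilinear form being that of Q_S), λ > 0, and Λ_Q = λ. Moreover, Λ_Q is the maximum of λ over all such triples (S, α, λ). -/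
open scoped TensorProduct

universe u

section TitsForm

variable {V : Type} [Fintype V]

/-- The Tits form of a finite quiver with `c i j` arrows from vertex `i` to vertex `j`. -/
def titsForm (c : V → V → ℕ) (α : V → ℝ) : ℝ :=
  ∑ i, α i ^ 2 - ∑ i, ∑ j, (c i j : ℝ) * α i * α j

/-- The symmetric bilinear form associated with the Tits form. -/
def titsBilin (c : V → V → ℕ) (α β : V → ℝ) : ℝ :=
  titsForm c (α + β) - titsForm c α - titsForm c β

/-- `Λ_Q`: the maximum of `-q_Q` on the standard simplex. -/
noncomputable def LambdaQ (c : V → V → ℕ) : ℝ :=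
  sSup ((fun α => - titsForm c α) '' stdSimplex ℝ V)

/-- The underlying graph of the full subquiver of `Q` on the vertex set `S` is connected. -/
def SubquiverConnected (c : V → V → ℕ) (S : Finset V) : Prop :=
  (SimpleGraph.fromRel fun i j : {x // x ∈ S} => 0 < c i.1 j.1 + c j.1 i.1).Connected

/-- The integral Tits form. -/
def titsFormZ (c : V → V → ℕ) (α : V → ℤ) : ℤ :=
  ∑ i, α i ^ 2 - ∑ i, ∑ j, (c i j : ℤ) * α i * α j

/-- The integral symmetric bilinear form associated with the Tits form. -/
def titsBilinZ (c : V → V → ℕ) (α β : V → ℤ) : ℤ :=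
  titsFormZ c (α + β) - titsFormZ c α - titsFormZ c β

variable [DecidableEq V]

/-- The simple reflection at a loop-free vertex `i`. -/
def simpleReflection (c : V → V → ℕ) (i : V) (β : V → ℤ) : V → ℤ :=
  β - titsBilinZ c β (Pi.single i 1) • Pi.single i 1

/-- `α` is a positive real root: it is obtained from a standard basis vector at a loop-free
vertex by applying finitely many simple reflections at loop-free vertices. -/
def IsPositiveRealRoot (c : V → V → ℕ) (α : V → ℕ) : Prop :=
  ∃ (l : List V) (j : V), (∀ i ∈ l, c i i = 0) ∧ c j j = 0 ∧
    (fun i => (α i : ℤ)) = l.foldr (simpleReflection c) (Pi.single j 1)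

end TitsForm


section Helpers

set_option linter.unusedSectionVars false

variable {V : Type} [Fintype V]

lemma myBilin_eq (c : V → V → ℕ) (α β : V → ℝ) :
    titsBilin c α β = 2 * ∑ m, α m * β m
      - ∑ i, ∑ j, (c i j : ℝ) * (α i * β j + β i * α j) := by
  simp only [titsBilin, titsForm, Pi.add_apply]
  rw [Finset.mul_sum]
  rw [show (∑ i, (α i + β i)^2) = ∑ i, (α i ^2 + β i ^2 + 2*(α i * β i)) from
    Finset.sum_congr rfl fun i _ => by ring]
  rw [show (∑ i, ∑ j, (c i j:ℝ) * (α i + β i) * (α j + β j))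
      = ∑ i, ∑ j, ((c i j:ℝ) * α i * α j + (c i j:ℝ) * β i * β j
          + (c i j:ℝ) * (α i * β j + β i * α j)) from
    Finset.sum_congr rfl fun i _ => Finset.sum_congr rfl fun j _ => by ring]
  simp only [Finset.sum_add_distrib]
  ring

lemma myForm_add_smul (c : V → V → ℕ) (α v : V → ℝ) (t : ℝ) :
    titsForm c (α + t • v) = titsForm c α + t * titsBilin c α v + t^2 * titsForm c v := by
  rw [myBilin_eq]
  simp only [titsForm, Pi.add_apply, Pi.smul_apply, smul_eq_mul]
  rw [show (∑ i, (α i + t * v i)^2) = ∑ i, (α i ^2 + t^2 * v i ^2 + 2*t*(α i * v i)) from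
    Finset.sum_congr rfl fun i _ => by ring]
  rw [show (∑ i, ∑ j, (c i j:ℝ) * (α i + t * v i) * (α j + t * v j))
      = ∑ i, ∑ j, ((c i j:ℝ) * α i * α j + t^2 * ((c i j:ℝ) * v i * v j)
          + t * ((c i j:ℝ) * (α i * v j + v i * α j))) from
    Finset.sum_congr rfl fun i _ => Finset.sum_congr rfl fun j _ => by ring]
  simp only [Finset.sum_add_distrib, ← Finset.mul_sum]
  ring

lemma myBilin_sub_right (c : V → V → ℕ) (α x y : V → ℝ) :
    titsBilin c α (x - y) = titsBilin c α x - titsBilin c α y := by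
  simp only [myBilin_eq, Pi.sub_apply, mul_sub, sub_mul, mul_add,
    Finset.sum_sub_distrib, Finset.sum_add_distrib]
  ring

lemma myForm_smul (c : V → V → ℕ) (t : ℝ) (v : V → ℝ) :
    titsForm c (t • v) = t^2 * titsForm c v := by
  simp only [titsForm, Pi.smul_apply, smul_eq_mul, mul_pow, ← Finset.mul_sum, mul_sub]
  congr 1
  rw [Finset.mul_sum]
  exact Finset.sum_congr rfl fun i _ => by
    rw [Finset.mul_sum]; exact Finset.sum_congr rfl fun j _ => by ring

variable [DecidableEq V]

lemma myBilin_single (c : V → V → ℕ) (α : V → ℝ) (k : V) :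
    titsBilin c α (Pi.single k 1) = 2 * α k - (∑ j, (c k j : ℝ) * α j)
      - ∑ i, (c i k : ℝ) * α i := by
  rw [myBilin_eq]
  simp only [Pi.single_apply, mul_ite, mul_one, mul_zero, ite_mul, zero_mul, one_mul, mul_add,
    Finset.sum_add_distrib, Finset.sum_ite_eq', Finset.mem_univ, if_true]
  rw [Finset.sum_comm (f := fun i j => if i = k then (c i j : ℝ) * α j else 0)]
  simp only [Finset.sum_ite_eq', Finset.mem_univ, if_true]
  ring_nf

lemma mySum_bilin_single (c : V → V → ℕ) (α : V → ℝ) :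
    ∑ k, α k * titsBilin c α (Pi.single k 1) = 2 * titsForm c α := by
  simp only [myBilin_single, titsForm]
  rw [show (∑ k, α k * (2 * α k - (∑ j, (c k j : ℝ) * α j) - ∑ i, (c i k : ℝ) * α i))
      = ∑ k, (2 * α k ^2 - (∑ j, (c k j:ℝ) * α k * α j) - ∑ i, (c i k:ℝ) * α i * α k) from
    Finset.sum_congr rfl fun k _ => by
      rw [mul_sub, mul_sub, Finset.mul_sum, Finset.mul_sum]
      congr 1
      · congr 1
        · ring
        · exact Finset.sum_congr rfl fun j _ => by ring
      · exact Finset.sum_congr rfl fun i _ => by ring]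
  simp only [Finset.sum_sub_distrib, ← Finset.mul_sum]
  rw [Finset.sum_comm (f := fun k i => (c i k : ℝ) * α i * α k)]
  ring

lemma myCont (c : V → V → ℕ) : Continuous (fun α : V → ℝ => - titsForm c α) := by
  unfold titsForm; fun_prop

lemma myBdd (c : V → V → ℕ) : BddAbove ((fun α => - titsForm c α) '' stdSimplex ℝ V) :=
  ((isCompact_stdSimplex ℝ V).image (myCont c)).bddAbove

lemma myLe_Lambda (c : V → V → ℕ) {β : V → ℝ} (hβ : β ∈ stdSimplex ℝ V) :
    - titsForm c β ≤ LambdaQ c :=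
  le_csSup (myBdd c) ⟨β, hβ, rfl⟩

lemma myExists_max (c : V → V → ℕ) [Nonempty V] :
    ∃ α ∈ stdSimplex ℝ V, LambdaQ c = - titsForm c α ∧
      ∀ β ∈ stdSimplex ℝ V, - titsForm c β ≤ - titsForm c α := by
  obtain ⟨α, hα, hmax⟩ := (isCompact_stdSimplex ℝ V).exists_isMaxOn
    ⟨_, single_mem_stdSimplex ℝ (Classical.arbitrary V)⟩ (myCont c).continuousOn
  rw [isMaxOn_iff] at hmax
  exact ⟨α, hα, le_antisymm (csSup_le (Set.Nonempty.image _ ⟨α, hα⟩)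
    (by rintro x ⟨β, hβ, rfl⟩; exact hmax β hβ)) (myLe_Lambda c hα), hmax⟩

lemma myQuad (a b ε : ℝ) (hε : 0 < ε) (h : ∀ t : ℝ, |t| < ε → a * t + b * t^2 ≤ 0) :
    a = 0 := by
  by_contra ha
  have h0 : 0 < |a| := abs_pos.2 ha
  set t0 : ℝ := min (ε/2) (|a| / (2 * (|b| + 1))) with ht0
  have ht0pos : 0 < t0 := lt_min (by linarith) (by positivity)
  set t : ℝ := if 0 < a then t0 else -t0 with ht
  have habs : |t| < ε := by
    rw [ht]; split <;> simp only [abs_neg, abs_of_pos ht0pos] <;>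
      exact lt_of_le_of_lt (min_le_left _ _) (by linarith)
  have key := h t habs
  have hat : a * t = |a| * t0 := by
    rw [ht]; split
    · rw [abs_of_pos ‹_›]
    · rw [abs_of_neg (lt_of_le_of_ne (not_lt.1 ‹_›) ha)]; ring
  have ht2 : t^2 = t0^2 := by rw [ht]; split <;> ring
  have hb : b * t^2 ≥ -(|b| * t0^2) := by
    rw [ht2]; nlinarith [neg_abs_le b, sq_nonneg t0]
  have h1 : t0 ≤ |a| / (2 * (|b| + 1)) := min_le_right _ _
  have h2 : |b| * t0 ≤ |b| * (|a| / (2 * (|b| + 1))) :=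
    mul_le_mul_of_nonneg_left h1 (abs_nonneg b)
  have h3 : |b| * (|a| / (2 * (|b| + 1))) < |a| := by
    rw [mul_div_assoc']
    rw [div_lt_iff₀ (by positivity : (0:ℝ) < 2 * (|b| + 1))]
    nlinarith [abs_nonneg b]
  nlinarith [abs_nonneg b]

def myExt (S : Finset V) (β : {x // x ∈ S} → ℝ) : V → ℝ :=
  fun v => if h : v ∈ S then β ⟨v, h⟩ else 0

lemma myExt_mem {S : Finset V} {β : {x // x ∈ S} → ℝ} {v : V} (h : v ∈ S) :
    myExt S β v = β ⟨v, h⟩ := dif_pos h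

lemma myExt_nmem {S : Finset V} {β : {x // x ∈ S} → ℝ} {v : V} (h : v ∉ S) :
    myExt S β v = 0 := dif_neg h

lemma mySum_ext (S : Finset V) (g : V → ℝ) (hg : ∀ v ∉ S, g v = 0) :
    ∑ v, g v = ∑ i : {x // x ∈ S}, g i.1 := by
  calc ∑ v, g v = ∑ v ∈ S, g v :=
        (Finset.sum_subset (Finset.subset_univ S) (fun v _ hv => hg v hv)).symm
    _ = ∑ i : {x // x ∈ S}, g i.1 := (Finset.sum_coe_sort S g).symm

lemma myForm_ext (c : V → V → ℕ) (S : Finset V) (β : {x // x ∈ S} → ℝ) :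
    titsForm c (myExt S β) = titsForm (fun i j : {x // x ∈ S} => c i.1 j.1) β := by
  unfold titsForm
  congr 1
  · rw [mySum_ext S (fun v => myExt S β v ^ 2) (fun v hv => by simp [myExt_nmem hv])]
    exact Finset.sum_congr rfl fun i _ => by rw [myExt_mem i.2]
  · rw [mySum_ext S (fun v => ∑ j, (c v j : ℝ) * myExt S β v * myExt S β j)
      (fun v hv => Finset.sum_eq_zero fun j _ => by simp [myExt_nmem hv])]
    refine Finset.sum_congr rfl fun i _ => ?_
    rw [mySum_ext S (fun j => (c i.1 j : ℝ) * myExt S β i.1 * myExt S β j)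
      (fun v hv => by simp [myExt_nmem hv])]
    exact Finset.sum_congr rfl fun j _ => by
      simp only []; rw [myExt_mem i.2, myExt_mem j.2]

lemma myExt_add {S : Finset V} (β γ : {x // x ∈ S} → ℝ) :
    myExt S (β + γ) = myExt S β + myExt S γ := by
  funext v
  by_cases h : v ∈ S
  · simp [myExt_mem h]
  · simp [myExt_nmem h]

lemma myBilin_ext (c : V → V → ℕ) (S : Finset V) (β γ : {x // x ∈ S} → ℝ) :
    titsBilin c (myExt S β) (myExt S γ)
      = titsBilin (fun i j : {x // x ∈ S} => c i.1 j.1) β γ := by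
  unfold titsBilin
  rw [← myExt_add, myForm_ext, myForm_ext, myForm_ext]

lemma myExt_single {S : Finset V} (i : {x // x ∈ S}) :
    myExt S (Pi.single i 1) = Pi.single i.1 1 := by
  funext v
  by_cases h : v ∈ S
  · rw [myExt_mem h, Pi.single_apply, Pi.single_apply]
    simp [Subtype.ext_iff]
  · rw [myExt_nmem h, Pi.single_apply, if_neg (by rintro rfl; exact h i.2)]

end Helpers

/-- for a wild quiver `Q`, the quantity `Λ_Q` is realized (and maximized) by an
effective wild connected full subquiver: there are a nonempty vertex subset `S`, a strictly
positive vector `α` on `S` summing to `1`, and `λ > 0` with `(α, eᵢ) = -2λ` for all `i ∈ S`,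
such that `Q_S` is connected and wild and `Λ_Q = λ`; moreover `Λ_Q` is the maximum of `λ`
over all such triples. -/
theorem lambda_eq_max_over_effective_subquivers (V : Type) [Fintype V] [DecidableEq V]
    (c : V → V → ℕ) (hw : 0 < LambdaQ c) :
    (∃ (S : Finset V) (α : {x // x ∈ S} → ℝ) (lam : ℝ),
      S.Nonempty ∧ SubquiverConnected c S ∧
      0 < LambdaQ (fun i j : {x // x ∈ S} => c i.1 j.1) ∧
      (∀ i, 0 < α i) ∧ (∑ i, α i = 1) ∧
      (∀ i, titsBilin (fun i j : {x // x ∈ S} => c i.1 j.1) α (Pi.single i 1) = -(2 * lam)) ∧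
      0 < lam ∧ LambdaQ c = lam) ∧
    ∀ (S : Finset V) (α : {x // x ∈ S} → ℝ) (lam : ℝ),
      S.Nonempty → SubquiverConnected c S →
      0 < LambdaQ (fun i j : {x // x ∈ S} => c i.1 j.1) →
      (∀ i, 0 < α i) → (∑ i, α i = 1) →
      (∀ i, titsBilin (fun i j : {x // x ∈ S} => c i.1 j.1) α (Pi.single i 1) = -(2 * lam)) →
      0 < lam → lam ≤ LambdaQ c := by
  classical
  -- Part B : maximality
  have partB : ∀ (S : Finset V) (α : {x // x ∈ S} → ℝ) (lam : ℝ),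
      (∀ i, 0 ≤ α i) → (∑ i, α i = 1) →
      (∀ i, titsBilin (fun i j : {x // x ∈ S} => c i.1 j.1) α (Pi.single i 1) = -(2 * lam)) →
      lam ≤ LambdaQ c := by
    intro S α lam hpos hsum hbil
    have h2q : 2 * titsForm (fun i j : {x // x ∈ S} => c i.1 j.1) α = -(2 * lam) := by
      rw [← mySum_bilin_single]
      calc ∑ k, α k * titsBilin (fun i j : {x // x ∈ S} => c i.1 j.1) α (Pi.single k 1)
          = ∑ k, α k * (-(2 * lam)) :=
            Finset.sum_congr rfl fun k _ => by rw [hbil k]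
        _ = (∑ k, α k) * (-(2 * lam)) := (Finset.sum_mul _ _ _).symm
        _ = -(2 * lam) := by rw [hsum, one_mul]
    have hq : titsForm (fun i j : {x // x ∈ S} => c i.1 j.1) α = -lam := by linarith
    have hmem : myExt S α ∈ stdSimplex ℝ V := by
      refine ⟨fun v => ?_, ?_⟩
      · by_cases h : v ∈ S
        · rw [myExt_mem h]; exact hpos _
        · rw [myExt_nmem h]
      · rw [mySum_ext S _ (fun v hv => myExt_nmem hv)]
        rw [show (∑ i : {x // x ∈ S}, myExt S α i.1) = ∑ i, α i from
          Finset.sum_congr rfl fun i _ => by rw [myExt_mem i.2]]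
        exact hsum
    have hle := myLe_Lambda c hmem
    rwa [myForm_ext, hq, neg_neg] at hle
  -- nonempty
  haveI hne : Nonempty V := by
    by_contra h
    rw [not_nonempty_iff] at h
    rw [LambdaQ, stdSimplex_of_isEmpty_index, Set.image_empty, Real.sSup_empty] at hw
    exact lt_irrefl 0 hw
  obtain ⟨a, haS, hLam, hmax⟩ := myExists_max c
  have ha0 : ∀ v, 0 ≤ a v := haS.1
  have hasum : ∑ v, a v = 1 := haS.2
  set S : Finset V := Finset.univ.filter (fun i => 0 < a i) with hSdef
  have hmemS : ∀ {v : V}, v ∈ S ↔ 0 < a v := fun {v} => by simp [hSdef]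
  have hS0 : ∀ v ∉ S, a v = 0 :=
    fun v hv => le_antisymm (not_lt.1 fun h => hv (hmemS.2 h)) (ha0 v)
  have hext : myExt S (fun i => a i.1) = a := funext fun v => by
    by_cases h : v ∈ S
    · rw [myExt_mem h]
    · rw [myExt_nmem h, hS0 v h]
  have hSne : S.Nonempty := by
    by_contra h
    rw [Finset.not_nonempty_iff_eq_empty] at h
    have h0 : ∑ v, a v = 0 := Finset.sum_eq_zero fun v _ => hS0 v (by simp [h])
    rw [hasum] at h0; norm_num at h0
  have hsumα : ∑ i : {x // x ∈ S}, a i.1 = 1 := by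
    rw [← mySum_ext S a hS0]; exact hasum
  -- KKT equal multipliers
  have hKKT : ∀ i ∈ S, ∀ j ∈ S,
      titsBilin c a (Pi.single i 1) = titsBilin c a (Pi.single j 1) := by
    intro i hi j hj
    rcases eq_or_ne i j with rfl | hij
    · rfl
    have hai : 0 < a i := hmemS.1 hi
    have haj : 0 < a j := hmemS.1 hj
    have hquad : ∀ t : ℝ, |t| < min (a i) (a j) →
        (-(titsBilin c a (Pi.single i 1 - Pi.single j 1))) * t
          + (-(titsForm c (Pi.single i 1 - Pi.single j 1))) * t^2 ≤ 0 := by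
      intro t ht
      have htlt := abs_lt.1 ht
      have hti : -(a i) < t := lt_of_le_of_lt (neg_le_neg (min_le_left _ _)) htlt.1
      have htj : t < a j := lt_of_lt_of_le htlt.2 (min_le_right _ _)
      have hmem2 : a + t • (Pi.single i 1 - Pi.single j 1) ∈ stdSimplex ℝ V := by
        refine ⟨fun k => ?_, ?_⟩
        · simp only [Pi.add_apply, Pi.smul_apply, Pi.sub_apply, smul_eq_mul]
          rcases eq_or_ne k i with rfl | hki
          · rw [Pi.single_eq_same, Pi.single_eq_of_ne hij]
            have := ha0 k
            nlinarith
          · rcases eq_or_ne k j with rfl | hkj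
            · rw [Pi.single_eq_of_ne hki, Pi.single_eq_same]
              have := ha0 k
              nlinarith
            · rw [Pi.single_eq_of_ne hki, Pi.single_eq_of_ne hkj]
              simpa using ha0 k
        · simp only [Pi.add_apply, Pi.smul_apply, Pi.sub_apply, smul_eq_mul]
          rw [Finset.sum_add_distrib, hasum, ← Finset.mul_sum, Finset.sum_sub_distrib,
            Finset.sum_pi_single', Finset.sum_pi_single']
          simp
      have hle := hmax _ hmem2
      rw [myForm_add_smul] at hle
      nlinarith [hle]
    have hB := myQuad _ _ _ (lt_min hai haj) hquad
    rw [neg_eq_zero, myBilin_sub_right] at hB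
    linarith
  -- common multiplier value
  have hval : ∀ i ∈ S, titsBilin c a (Pi.single i 1) = -(2 * LambdaQ c) := by
    intro i hi
    have hsum2 : ∑ k, a k * titsBilin c a (Pi.single k 1)
        = ∑ k, a k * titsBilin c a (Pi.single i 1) := by
      refine Finset.sum_congr rfl fun k _ => ?_
      by_cases hk : k ∈ S
      · rw [hKKT k hk i hi]
      · rw [hS0 k hk]; ring
    rw [mySum_bilin_single, ← Finset.sum_mul, hasum, one_mul] at hsum2
    rw [← hsum2]
    have hqa : titsForm c a = - LambdaQ c := by rw [hLam]; ring
    rw [hqa]; ring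
  -- connectedness of the support
  have hconn : SubquiverConnected c S := by
    obtain ⟨u, hu⟩ := hSne
    have hreach : ∀ v : {x // x ∈ S},
        (SimpleGraph.fromRel fun i j : {x // x ∈ S} =>
          0 < c i.1 j.1 + c j.1 i.1).Reachable ⟨u, hu⟩ v := by
      by_contra hcon
      push_neg at hcon
      obtain ⟨w, hw2⟩ := hcon
      set G := SimpleGraph.fromRel fun i j : {x // x ∈ S} =>
          0 < c i.1 j.1 + c j.1 i.1 with hG
      set P : V → Prop := fun x => ∃ h : x ∈ S, G.Reachable ⟨u, hu⟩ ⟨x, h⟩ with hP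
      set a₁ : V → ℝ := fun x => if P x then a x else 0 with ha₁
      set a₂ : V → ℝ := fun x => if P x then 0 else a x with ha₂
      have hadd : a = a₁ + a₂ := funext fun x => by
        simp only [ha₁, ha₂, Pi.add_apply]; split <;> ring
      have hcross : ∀ x y, P x → ¬ P y → a x ≠ 0 → a y ≠ 0 → c x y = 0 ∧ c y x = 0 := by
        intro x y hx hy hax hay
        have hyS : y ∈ S := hmemS.2 (lt_of_le_of_ne (ha0 y) (Ne.symm hay))
        obtain ⟨hxS, hxr⟩ := hx
        by_contra hc
        have hpos2 : 0 < c x y + c y x := by omega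
        have hxy : x ≠ y := fun h => hy (h ▸ ⟨hxS, hxr⟩)
        have hadj : G.Adj ⟨x, hxS⟩ ⟨y, hyS⟩ := by
          rw [hG, SimpleGraph.fromRel_adj]
          exact ⟨fun hh => hxy (congrArg Subtype.val hh), Or.inl hpos2⟩
        exact hy ⟨hyS, hxr.trans hadj.reachable⟩
      have hB0 : titsBilin c a₁ a₂ = 0 := by
        rw [myBilin_eq]
        have h1 : ∀ m, a₁ m * a₂ m = 0 := fun m => by
          simp only [ha₁, ha₂]; split <;> ring
        have h2 : ∀ x y : V, (c x y : ℝ) * (a₁ x * a₂ y + a₂ x * a₁ y) = 0 := by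
          intro x y
          by_cases hx : P x <;> by_cases hy : P y
          · simp [ha₁, ha₂, hx, hy]
          · simp only [ha₁, ha₂, if_pos hx, if_neg hy]
            rcases eq_or_ne (a x) 0 with h | h
            · simp [h]
            · rcases eq_or_ne (a y) 0 with h' | h'
              · simp [h']
              · rw [(hcross x y hx hy h h').1]; simp
          · simp only [ha₁, ha₂, if_pos hy, if_neg hx]
            rcases eq_or_ne (a x) 0 with h | h
            · simp [h]
            · rcases eq_or_ne (a y) 0 with h' | h'
              · simp [h']
              · rw [(hcross y x hy hx h' h).2]; simp
          · simp [ha₁, ha₂, hx, hy]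
        rw [Finset.sum_eq_zero fun m _ => h1 m,
          Finset.sum_eq_zero fun x _ => Finset.sum_eq_zero fun y _ => h2 x y]
        ring
      have hqdec : titsForm c a = titsForm c a₁ + titsForm c a₂ := by
        have hBdef : titsBilin c a₁ a₂
            = titsForm c (a₁ + a₂) - titsForm c a₁ - titsForm c a₂ := rfl
        rw [hB0] at hBdef
        rw [hadd]; linarith
      have h1nn : ∀ x, 0 ≤ a₁ x := fun x => by
        simp only [ha₁]; split
        · exact ha0 x
        · exact le_refl 0
      have h2nn : ∀ x, 0 ≤ a₂ x := fun x => by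
        simp only [ha₂]; split
        · exact le_refl 0
        · exact ha0 x
      have hPu : P u := ⟨hu, SimpleGraph.Reachable.refl _⟩
      have ha₁u : a₁ u = a u := by simp [ha₁, hPu]
      have htpos : 0 < ∑ x, a₁ x := by
        have := Finset.single_le_sum (fun x _ => h1nn x) (Finset.mem_univ u)
        rw [ha₁u] at this
        exact lt_of_lt_of_le (hmemS.1 hu) this
      have hw2' : ¬ P w.1 := by
        rintro ⟨h, hr⟩
        exact hw2 hr
      have haw : 0 < a w.1 := hmemS.1 w.2
      have ha₂w : a₂ w.1 = a w.1 := by simp [ha₂, hw2']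
      have hspos : 0 < ∑ x, a₂ x := by
        have := Finset.single_le_sum (fun x _ => h2nn x) (Finset.mem_univ w.1)
        rw [ha₂w] at this
        exact lt_of_lt_of_le haw this
      have hsum12 : (∑ x, a₁ x) + (∑ x, a₂ x) = 1 := by
        rw [← Finset.sum_add_distrib]
        rw [← hasum]
        exact Finset.sum_congr rfl fun x _ => (congrFun hadd x).symm
      have hbound : ∀ b : V → ℝ, (∀ x, 0 ≤ b x) → 0 < ∑ x, b x →
          - titsForm c b ≤ (∑ x, b x)^2 * LambdaQ c := by
        intro b hbnn hbpos
        set s := ∑ x, b x with hs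
        have hsne : s ≠ 0 := ne_of_gt hbpos
        have hmemb : s⁻¹ • b ∈ stdSimplex ℝ V := by
          refine ⟨fun x => mul_nonneg (by positivity) (hbnn x), ?_⟩
          simp only [Pi.smul_apply, smul_eq_mul, ← Finset.mul_sum]
          rw [← hs, inv_mul_cancel₀ hsne]
        have hlb := myLe_Lambda c hmemb
        rw [myForm_smul] at hlb
        calc - titsForm c b = s^2 * -(s⁻¹^2 * titsForm c b) := by
              field_simp
          _ ≤ s^2 * LambdaQ c := mul_le_mul_of_nonneg_left hlb (sq_nonneg s)
      have hb1 := hbound a₁ h1nn htpos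
      have hb2 := hbound a₂ h2nn hspos
      have hΛa : LambdaQ c = - titsForm c a := hLam
      have hkey : (∑ x, a₁ x)^2 + (∑ x, a₂ x)^2 < 1 := by
        nlinarith [mul_pos htpos hspos]
      have hstep : LambdaQ c ≤ ((∑ x, a₁ x)^2 + (∑ x, a₂ x)^2) * LambdaQ c := by
        rw [hΛa]; nlinarith [hb1, hb2, hqdec]
      have hstep2 : ((∑ x, a₁ x)^2 + (∑ x, a₂ x)^2) * LambdaQ c < 1 * LambdaQ c :=
        mul_lt_mul_of_pos_right hkey hw
      rw [one_mul] at hstep2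
      exact lt_irrefl _ (lt_of_le_of_lt hstep hstep2)
    haveI : Nonempty {x // x ∈ S} := ⟨⟨u, hu⟩⟩
    exact SimpleGraph.Connected.mk fun v w' => (hreach v).symm.trans (hreach w')
  -- assemble
  refine ⟨⟨S, fun i => a i.1, LambdaQ c, hSne, hconn, ?_, fun i => hmemS.1 i.2, hsumα,
    ?_, hw, rfl⟩, ?_⟩
  · -- wild subquiver
    have hmemα : (fun i : {x // x ∈ S} => a i.1) ∈ stdSimplex ℝ {x // x ∈ S} :=
      ⟨fun i => (hmemS.1 i.2).le, hsumα⟩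
    have hle := myLe_Lambda (fun i j : {x // x ∈ S} => c i.1 j.1) hmemα
    rw [← myForm_ext c S, hext, ← hLam] at hle
    exact lt_of_lt_of_le hw hle
  · -- multiplier equations
    intro i
    rw [← myBilin_ext c S _ (Pi.single i 1), myExt_single, hext]
    exact hval i.1 i.2
  · intro S α lam _ _ _ hpos hsum hbil _
    exact partB S α lam (fun i => (hpos i).le) hsum hbil
end

section
/- Let Q be a quiver of type Ẽ̃E₈: vertex set {1,…,10}, with exactly one (arbitrarily oriented) arrow joining each of the pairs {1,2}, {2,3}, {3,4}, {3,5}, {5,6}, {6,7}, {7,8}, {8,9}, {9,10}, and no other arrows. Then Λ_Q = 1/2480, and the maximum of −q_Q on S_Q is attained at the point α = (1/1240)(76, 153, 231, 115, 195, 160, 126, 93, 61, 30). -/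
open scoped TensorProduct

universe u

/-- The edges of the graph `Ẽ̃E₈` on vertices `0, …, 9` (labelled `1, …, 10` in the paper):
a chain `1–2–3–5–6–7–8–9–10` with an extra vertex `4` attached to `3`. -/
def ttE8pairs : List (Fin 10 × Fin 10) :=
  [(0, 1), (1, 2), (2, 3), (2, 4), (4, 5), (5, 6), (6, 7), (7, 8), (8, 9)]

/-- The number of edges between two vertices in the graph `Ẽ̃E₈`. -/
def ttE8adj (i j : Fin 10) : ℕ :=
  if (i, j) ∈ ttE8pairs ∨ (j, i) ∈ ttE8pairs then 1 else 0

lemma psd_key (b0 b1 b2 b3 b4 b5 b6 b7 b8 b9 : ℝ) (hs : b0 + b1 + b2 + b3 + b4 + b5 + b6 + b7 + b8 + b9 = 1) :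
    -((b0^2 + b1^2 + b2^2 + b3^2 + b4^2 + b5^2 + b6^2 + b7^2 + b8^2 + b9^2) - (b0*b1 + b1*b2 + b2*b3 + b2*b4 + b4*b5 + b5*b6 + b6*b7 + b7*b8 + b8*b9)) ≤ 1 / 2480 := by
  have h : (b0^2 + b1^2 + b2^2 + b3^2 + b4^2 + b5^2 + b6^2 + b7^2 + b8^2 + b9^2) - (b0*b1 + b1*b2 + b2*b3 + b2*b4 + b4*b5 + b5*b6 + b6*b7 + b7*b8 + b8*b9) + 1 / 2480
      = (2481/2480 : ℝ) * ((1 : ℝ) * b0 + (-413/827 : ℝ) * b1 + (1/2481 : ℝ) * b2 + (1/2481 : ℝ) * b3 + (1/2481 : ℝ) * b4 + (1/2481 : ℝ) * b5 + (1/2481 : ℝ) * b6 + (1/2481 : ℝ) * b7 + (1/2481 : ℝ) * b8 + (1/2481 : ℝ) * b9)^2 + (621/827 : ℝ) * ((1 : ℝ) * b1 + (-413/621 : ℝ) * b2 + (1/1242 : ℝ) * b3 + (1/1242 : ℝ) * b4 + (1/1242 : ℝ) * b5 + (1/1242 : ℝ) * b6 + (1/1242 : ℝ) * b7 + (1/1242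 : ℝ) * b8 + (1/1242 : ℝ) * b9)^2 + (415/621 : ℝ) * ((1 : ℝ) * b2 + (-62/83 : ℝ) * b3 + (-62/83 : ℝ) * b4 + (1/830 : ℝ) * b5 + (1/830 : ℝ) * b6 + (1/830 : ℝ) * b7 + (1/830 : ℝ) * b8 + (1/830 : ℝ) * b9)^2 + (625/996 : ℝ) * ((1 : ℝ) * b3 + (-371/625 : ℝ) * b4 + (1/625 : ℝ) * b5 + (1/625 : ℝ) * b6 + (1/625 : ℝ) * b7 + (1/625 : ℝ) * b8 + (1/625 : ℝ) * b9)^2 + (254/625 : ℝ) * ((1 : ℝ) * b4 + (-623/508 : ℝ) * b5 + (1/254 : ℝ) * b6 + (1/254 : ℝ) * b7 + (1/254 : ℝ) * b8 + (1/254 : ℝ) * b9)^2 + (1977/5080 : ℝ) * ((1 : ℝ) * b5 + (-2528/1977 : ℝ) * b6 + (4/659 : ℝ) * b7 + (4/659 : ℝ) * b8 + (4/659 : ℝ) * b9)^2 + (2879/7908 : ℝ) * ((1 : ℝ) * b6 + (-3927/2879 : ℝ) * b7 + (27/2879 : ℝ) * b8 + (27/2879 : ℝ) * b9)^2 + (930/2879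 : ℝ) * ((1 : ℝ) * b7 + (-95/62 : ℝ) * b8 + (29/1860 : ℝ) * b9)^2 + (15/62 : ℝ) * ((1 : ℝ) * b8 + (-61/30 : ℝ) * b9)^2 := by
    rw [show (1:ℝ)/2480 = (1/2480) * (b0 + b1 + b2 + b3 + b4 + b5 + b6 + b7 + b8 + b9)^2 by rw [hs]; ring]
    ring
  have h2 : (0:ℝ) ≤ (b0^2 + b1^2 + b2^2 + b3^2 + b4^2 + b5^2 + b6^2 + b7^2 + b8^2 + b9^2) - (b0*b1 + b1*b2 + b2*b3 + b2*b4 + b4*b5 + b5*b6 + b6*b7 + b7*b8 + b8*b9) + 1 / 2480 := by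
    rw [h]; positivity
  linarith

lemma sum10 {M : Type*} [AddCommMonoid M] (f : Fin 10 → M) :
    ∑ i, f i = f 0 + f 1 + f 2 + f 3 + f 4 + f 5 + f 6 + f 7 + f 8 + f 9 := by
  simp [Fin.sum_univ_succ, add_assoc]

set_option maxHeartbeats 1000000 in
lemma adj_sum_eval (α : Fin 10 → ℝ) :
    ∑ i, ∑ j, (ttE8adj i j : ℝ) * α i * α j
      = 2 * (α 0*α 1 + α 1*α 2 + α 2*α 3 + α 2*α 4 + α 4*α 5 + α 5*α 6 + α 6*α 7 + α 7*α 8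
          + α 8*α 9) := by
  simp only [sum10]
  simp (config := { decide := true }) only [ttE8adj, ttE8pairs, List.mem_cons, List.not_mem_nil,
    Prod.mk.injEq, or_false, Nat.cast_ite, Nat.cast_one, Nat.cast_zero]
  norm_num
  ring

lemma tits_eval (c : Fin 10 → Fin 10 → ℕ)
    (hc : ∀ i j, c i j + c j i = ttE8adj i j) (α : Fin 10 → ℝ) :
    titsForm c α =
      (α 0^2 + α 1^2 + α 2^2 + α 3^2 + α 4^2 + α 5^2 + α 6^2 + α 7^2 + α 8^2 + α 9^2)
      - (α 0*α 1 + α 1*α 2 + α 2*α 3 + α 2*α 4 + α 4*α 5 + α 5*α 6 + α 6*α 7 + α 7*α 8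
          + α 8*α 9) := by
  have hsym : ∑ i, ∑ j, (c i j : ℝ) * α i * α j
      = ∑ i, ∑ j, (c j i : ℝ) * α i * α j := by
    rw [Finset.sum_comm]
    exact Finset.sum_congr rfl fun i _ => Finset.sum_congr rfl fun j _ => by ring
  have h2 : (2:ℝ) * ∑ i, ∑ j, (c i j : ℝ) * α i * α j
      = ∑ i, ∑ j, (ttE8adj i j : ℝ) * α i * α j := by
    rw [two_mul]
    nth_rewrite 2 [hsym]
    rw [← Finset.sum_add_distrib]
    refine Finset.sum_congr rfl fun i _ => ?_
    rw [← Finset.sum_add_distrib]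
    refine Finset.sum_congr rfl fun j _ => ?_
    have hcast : (c i j : ℝ) + (c j i : ℝ) = (ttE8adj i j : ℝ) := by
      rw [← Nat.cast_add, hc i j]
    linear_combination (α i * α j) * hcast
  have h3 := adj_sum_eval α
  have hq : ∑ i, α i ^ 2
      = α 0^2 + α 1^2 + α 2^2 + α 3^2 + α 4^2 + α 5^2 + α 6^2 + α 7^2 + α 8^2 + α 9^2 :=
    sum10 _
  unfold titsForm
  rw [hq]
  linarith [h2, h3]

/-- for any quiver whose underlying graph is `Ẽ̃E₈` (arrows oriented
arbitrarily), `Λ_Q = 1/2480`, and the maximum of `-q_Q` on the standard simplex is attained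
at `α = (76, 153, 231, 115, 195, 160, 126, 93, 61, 30)/1240`. -/
theorem lambda_ttE8 (c : Fin 10 → Fin 10 → ℕ)
    (hc : ∀ i j, c i j + c j i = ttE8adj i j) :
    LambdaQ c = 1 / 2480 ∧
      (fun i => (![76, 153, 231, 115, 195, 160, 126, 93, 61, 30] i : ℝ) / 1240) ∈
        stdSimplex ℝ (Fin 10) ∧
      - titsForm c (fun i => (![76, 153, 231, 115, 195, 160, 126, 93, 61, 30] i : ℝ) / 1240) =
        LambdaQ c := by
  set αm : Fin 10 → ℝ :=
    (fun i => (![76, 153, 231, 115, 195, 160, 126, 93, 61, 30] i : ℝ) / 1240) with hαm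
  have hmem : αm ∈ stdSimplex ℝ (Fin 10) := by
    constructor
    · intro i
      fin_cases i <;> norm_num [hαm]
    · rw [sum10]
      norm_num [hαm, show ((![76, 153, 231, 115, 195, 160, 126, 93, 61, 30] : Fin 10 → ℝ) 0) = 76 from rfl, show ((![76, 153, 231, 115, 195, 160, 126, 93, 61, 30] : Fin 10 → ℝ) 1) = 153 from rfl, show ((![76, 153, 231, 115, 195, 160, 126, 93, 61, 30] : Fin 10 → ℝ) 2) = 231 from rfl, show ((![76, 153, 231, 115, 195, 160, 126, 93, 61, 30] : Fin 10 → ℝ) 3) = 115 from rfl, show ((![76, 153, 231, 115, 195, 160, 126, 93, 61, 30] : Fin 10 → ℝ) 4) = 195 from rfl, show ((![76, 153, 231, 115, 195, 160, 126, 93, 61, 30] : Fin 10 → ℝ) 5) = 160 from rfl, show ((![76, 153, 231, 115, 195, 160, 126, 93, 61, 30] : Fin 10 → ℝ) 6) = 126 from rfl, show ((![76, 153, 231, 115, 195, 160, 126, 93, 61, 30] : Fin 10 → ℝ) 7) = 93 from rfl, show ((![76, 153, 231, 115, 195, 160, 126, 93, 61, 30] : Fin 10 → ℝ) 8) = 61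 from rfl, show ((![76, 153, 231, 115, 195, 160, 126, 93, 61, 30] : Fin 10 → ℝ) 9) = 30 from rfl]
  have hval : - titsForm c αm = 1 / 2480 := by
    rw [tits_eval c hc]
    norm_num [hαm, show ((![76, 153, 231, 115, 195, 160, 126, 93, 61, 30] : Fin 10 → ℝ) 0) = 76 from rfl, show ((![76, 153, 231, 115, 195, 160, 126, 93, 61, 30] : Fin 10 → ℝ) 1) = 153 from rfl, show ((![76, 153, 231, 115, 195, 160, 126, 93, 61, 30] : Fin 10 → ℝ) 2) = 231 from rfl, show ((![76, 153, 231, 115, 195, 160, 126, 93, 61, 30] : Fin 10 → ℝ) 3) = 115 from rfl, show ((![76, 153, 231, 115, 195, 160, 126, 93, 61, 30] : Fin 10 → ℝ) 4) = 195 from rfl, show ((![76, 153, 231, 115, 195, 160, 126, 93, 61, 30] : Fin 10 → ℝ) 5) = 160 from rfl, show ((![76, 153, 231, 115, 195, 160, 126, 93, 61, 30] : Fin 10 → ℝ) 6) = 126 from rfl, show ((![76, 153, 231, 115, 195, 160, 126, 93, 61, 30] : Fin 10 → ℝ) 7) = 93 from rfl, show ((![76, 153, 231, 115, 195, 160, 126,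 93, 61, 30] : Fin 10 → ℝ) 8) = 61 from rfl, show ((![76, 153, 231, 115, 195, 160, 126, 93, 61, 30] : Fin 10 → ℝ) 9) = 30 from rfl]
  have hub : ∀ x ∈ (fun α => - titsForm c α) '' stdSimplex ℝ (Fin 10), x ≤ 1 / 2480 := by
    rintro x ⟨β, ⟨hpos, hsum⟩, rfl⟩
    have hs : β 0 + β 1 + β 2 + β 3 + β 4 + β 5 + β 6 + β 7 + β 8 + β 9 = 1 := by
      rw [← hsum]; exact (sum10 β).symm
    simp only
    rw [tits_eval c hc]
    exact psd_key (β 0) (β 1) (β 2) (β 3) (β 4) (β 5) (β 6) (β 7) (β 8) (β 9) hs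
  have hne : ((fun α => - titsForm c α) '' stdSimplex ℝ (Fin 10)).Nonempty :=
    ⟨_, ⟨αm, hmem, rfl⟩⟩
  have hL : LambdaQ c = 1 / 2480 := by
    refine le_antisymm (csSup_le hne hub) ?_
    rw [← hval]
    exact le_csSup ⟨1 / 2480, hub⟩ ⟨αm, hmem, rfl⟩
  exact ⟨hL, hmem, by rw [hval, hL]⟩
end
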